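/- In the Δ-periodic model, suppose S_{u,v} and S_{w,z} are segments, v_i is an internal vertex of S_{u,v}, and z_j is an internal vertex of S_{w,z} maximizing the fastest-path duration D_{v_i, z_·} over internal vertices of S_{w,z} (the split vertex). If the fastest temporal path from v_i to z_j leaves S_{u,v} through u and enters S_{w,z} through w, then for every internal vertex z_ℓ of S_{w,z} strictly closer to w than z_j, some fastest temporal path from v_i to z_ℓ also leaves through u and enters through w. -/

import Mathlib

open SimpleGraph

/-- The residue of `a - b` modulo `Δ`, taken in `{1, …, Δ}` (value `Δ` when `a ≡ b`). -/
def resDelta (Δ : ℕ) (a b : ℤ) : ℤ :=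
  if (a - b) % (Δ : ℤ) = 0 then (Δ : ℤ) else (a - b) % (Δ : ℤ)

/-- In the Δ-periodic temporal graph `(G, lab, Δ)`, edge `e` is active at time `t`. -/
def Active {V : Type*} (G : SimpleGraph V) (Δ : ℕ) (lab : Sym2 V → ℤ)
    (e : Sym2 V) (t : ℤ) : Prop :=
  e ∈ G.edgeSet ∧ 1 ≤ t ∧ t ≡ lab e [ZMOD (Δ : ℤ)]

/-- The labeling assigns every edge a label in `{1, …, Δ}`. -/
def ValidLab {V : Type*} (G : SimpleGraph V) (Δ : ℕ) (lab : Sym2 V → ℤ) : Prop :=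
  ∀ e ∈ G.edgeSet, lab e ∈ Finset.Icc (1 : ℤ) (Δ : ℤ)

/-- `times` is a valid schedule of strictly increasing activation times for the walk `W`. -/
def IsTemporalWalk {V : Type*} (G : SimpleGraph V) (Δ : ℕ) (lab : Sym2 V → ℤ)
    {u v : V} (W : G.Walk u v) (times : List ℤ) : Prop :=
  List.Forall₂ (fun e t => Active G Δ lab e t) W.edges times ∧ times.Chain' (· < ·)

/-- Duration of a temporal path with the given traversal times. -/
def duration (times : List ℤ) : ℤ := times.getLast! - times.head! + 1

/-- There is a temporal path from `u` to `v` of duration `d`. -/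
def HasDur {V : Type*} (G : SimpleGraph V) (Δ : ℕ) (lab : Sym2 V → ℤ)
    (u v : V) (d : ℤ) : Prop :=
  ∃ (W : G.Walk u v) (times : List ℤ), W.IsPath ∧ times ≠ [] ∧
    IsTemporalWalk G Δ lab W times ∧ duration times = d

/-- `d` is the duration of a fastest temporal path from `u` to `v`. -/
def IsFastest {V : Type*} (G : SimpleGraph V) (Δ : ℕ) (lab : Sym2 V → ℤ)
    (u v : V) (d : ℤ) : Prop :=
  HasDur G Δ lab u v d ∧ ∀ d', HasDur G Δ lab u v d' → d ≤ d'

section Helpers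

private lemma list_head!_eq {α} [Inhabited α] (l : List α) (h : 0 < l.length) :
    l.head! = l[0] := by
  cases l with
  | nil => simp at h
  | cons a t => rfl

private lemma list_getLast!_eq {α} [Inhabited α] (l : List α) (h : 0 < l.length) :
    l.getLast! = l[l.length - 1]'(by omega) :=
  List.getLast!_of_getLast? (by rw [List.getLast?_eq_getElem?]; exact List.getElem?_eq_getElem _)

private lemma list_getLast!_eq' {α} [Inhabited α] (l : List α) {n : ℕ} (hn : l.length = n)
    (h : 0 < n) : l.getLast! = l[n - 1]'(by omega) := by
  subst hn; exact list_getLast!_eq l (by omega)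

private lemma getLast!_take {α} [Inhabited α] (l : List α) {m : ℕ} (h1 : 0 < m)
    (h2 : m ≤ l.length) : (l.take m).getLast! = l[m - 1]'(by omega) := by
  apply List.getLast!_of_getLast?
  rw [List.getLast?_eq_getElem?, List.length_take]
  rw [show m ⊓ l.length - 1 = m - 1 from by omega]
  rw [List.getElem?_take, if_pos (by omega : m - 1 < m)]
  exact List.getElem?_eq_getElem (by omega)

private lemma forall₂_getElem {α β} {R : α → β → Prop} {l₁ : List α} {l₂ : List β}
    (h : List.Forall₂ R l₁ l₂) : ∀ {i : ℕ} (h₁ : i < l₁.length) (h₂ : i < l₂.length),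
    R (l₁[i]) (l₂[i]) := by
  induction h with
  | nil => intro i h₁ h₂; simp at h₁
  | cons ha hl ih =>
    intro i h₁ h₂
    cases i with
    | zero => simpa using ha
    | succ i => simpa using ih (by simpa using h₁) (by simpa using h₂)

private lemma list_head!_take {α} [Inhabited α] (l : List α) (m : ℕ) (hm : 0 < m) :
    (l.take m).head! = l.head! := by
  cases l with
  | nil => simp
  | cons a t => cases m with
    | zero => omega
    | succ m => rfl

private lemma list_getLast!_concat {α} [Inhabited α] (l : List α) (x : α) :
    (l ++ [x]).getLast! = x :=
  List.getLast!_of_getLast? (by simp)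

private lemma list_head!_concat {α} [Inhabited α] (l : List α) (x : α) (h : 0 < l.length) :
    (l ++ [x]).head! = l.head! := by
  cases l with
  | nil => simp at h
  | cons a t => rfl

private lemma chain'_lt_getElem {l : List ℤ} (hl : l.Chain' (· < ·)) {i j : ℕ}
    (hj : j < l.length) (hij : i < j) : l[i]'(lt_trans hij hj) < l[j] :=
  (List.pairwise_iff_getElem.mp (List.isChain_iff_pairwise.mp hl)) i j _ _ hij

variable {V : Type*} {G : SimpleGraph V}

private lemma getVert_mem {u v : V} (p : G.Walk u v) {n : ℕ} (h : n ≤ p.length) :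
    p.getVert n ∈ p.support :=
  Walk.mem_support_iff_exists_getVert.2 ⟨n, rfl, h⟩

private lemma eq_of_walk_length_zero {u v : V} (p : G.Walk u v) (h : p.length = 0) : u = v := by
  cases p with
  | nil => rfl
  | cons _ _ => simp [Walk.length_cons] at h

private lemma path_getVert_inj {u v : V} (p : G.Walk u v) (hp : p.IsPath) :
    ∀ i j, i ≤ p.length → j ≤ p.length → p.getVert i = p.getVert j → i = j := by
  revert hp
  induction p with
  | nil => intro _ i j hi hj _; simp [Walk.length_nil] at hi hj; omega
  | @cons u x v h q ih =>
    intro hp i j hi hj hij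
    rw [Walk.cons_isPath_iff] at hp
    simp only [Walk.length_cons] at hi hj
    cases i with
    | zero => cases j with
      | zero => rfl
      | succ j =>
        exfalso
        apply hp.2
        rw [Walk.getVert_cons_succ] at hij
        rw [show (Walk.cons h q).getVert 0 = u from rfl] at hij
        exact hij ▸ getVert_mem q (by omega)
    | succ i => cases j with
      | zero =>
        exfalso
        apply hp.2
        rw [Walk.getVert_cons_succ] at hij
        rw [show (Walk.cons h q).getVert 0 = u from rfl] at hij
        exact hij.symm ▸ getVert_mem q (by omega)
      | succ j =>
        rw [Walk.getVert_cons_succ, Walk.getVert_cons_succ] at hij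
        have := ih hp.1 i j (by omega) (by omega) hij
        omega

private lemma path_interior {u v c : V} (p : G.Walk u v) (hp : p.IsPath)
    (hc : c ∈ p.support) (hu : c ≠ u) (hv : c ≠ v) :
    ∃ a b, a ≠ b ∧ G.Adj c a ∧ G.Adj c b ∧ a ∈ p.support ∧ b ∈ p.support := by
  revert hp hc hu hv
  induction p with
  | nil =>
    intro hp hc hu _
    rw [Walk.support_nil] at hc
    simp at hc
    exact absurd hc hu
  | @cons u' x v' h q ih =>
    intro hp hc hu hv
    rw [Walk.cons_isPath_iff] at hp
    rw [Walk.support_cons] at hc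
    rcases List.mem_cons.mp hc with h1 | h2
    · exact absurd h1 hu
    · by_cases hcx : c = x
      · subst hcx
        cases q with
        | nil => exact absurd rfl hv
        | @cons _ y _ hxy q2 =>
          refine ⟨u', y, ?_, h.symm, hxy, ?_, ?_⟩
          · intro hEq
            apply hp.2
            rw [hEq]
            simp [Walk.support_cons]
          · simp [Walk.support_cons]
          · simp [Walk.support_cons]
      · obtain ⟨a, b, hab, ha, hb, hma, hmb⟩ := ih hp.1 h2 hcx hv
        exact ⟨a, b, hab, ha, hb,
          Walk.support_cons _ _ ▸ List.mem_cons.2 (Or.inr hma),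
          Walk.support_cons _ _ ▸ List.mem_cons.2 (Or.inr hmb)⟩

private lemma walk_edges_getElem {u v : V} (p : G.Walk u v) :
    ∀ (i : ℕ) (h : i < p.length),
      p.edges[i]'(by rwa [Walk.length_edges]) = s(p.getVert i, p.getVert (i + 1)) := by
  induction p with
  | nil => intro i h; simp at h
  | @cons u x v h q ih =>
    intro i hi
    cases i with
    | zero =>
      simp [Walk.edges_cons, Walk.getVert_cons_succ, Walk.getVert_zero]
    | succ i =>
      simp only [Walk.edges_cons, Walk.getVert_cons_succ, List.getElem_cons_succ]
      exact ih i (by simpa [Walk.length_cons, Nat.succ_lt_succ_iff] using hi)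

private lemma getVert_append_le {u v w : V} {p : G.Walk u v} {q : G.Walk v w} {i : ℕ}
    (hi : i ≤ p.length) : (p.append q).getVert i = p.getVert i := by
  rw [Walk.getVert_append]
  rcases Nat.lt_or_ge i p.length with h | h
  · simp [h]
  · have hEq : i = p.length := le_antisymm hi h
    subst hEq
    simp [Walk.getVert_length, Walk.getVert_zero]

private lemma getVert_takeUntil [DecidableEq V] {u v x : V} (p : G.Walk u v) (hx : x ∈ p.support)
    {i : ℕ} (hi : i ≤ (p.takeUntil x hx).length) :
    (p.takeUntil x hx).getVert i = p.getVert i := by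
  conv_rhs => rw [← p.take_spec hx]
  exact (getVert_append_le hi).symm

private lemma length_takeUntil_eq [DecidableEq V] {u v x : V} {p : G.Walk u v} (hp : p.IsPath)
    {k : ℕ} (hk : k ≤ p.length) (hgv : p.getVert k = x) (hx : x ∈ p.support) :
    (p.takeUntil x hx).length = k := by
  have h1 : p.getVert (p.takeUntil x hx).length = x := by
    rw [← getVert_takeUntil p hx le_rfl]
    exact Walk.getVert_length _
  exact path_getVert_inj p hp _ _ (Walk.length_takeUntil_le p hx) hk (h1.trans hgv.symm)

private lemma path_concat {u v w : V} {p : G.Walk u v} (hp : p.IsPath) (h : G.Adj v w)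
    (hw : w ∉ p.support) : (p.concat h).IsPath := by
  rw [Walk.isPath_def, Walk.support_concat]
  rw [List.nodup_append']
  refine ⟨hp.support_nodup, List.nodup_singleton _, ?_⟩
  intro a ha hb
  simp at hb
  subst hb
  exact hw ha

private lemma chain'_take_getLast!_lt (l : List ℤ) (hl : l.Chain' (· < ·)) {m : ℕ}
    (h1 : 0 < m) (h2 : m < l.length) : (l.take m).getLast! < l.getLast! := by
  rw [getLast!_take l h1 (le_of_lt h2), list_getLast!_eq l (by omega)]
  exact chain'_lt_getElem hl (by omega) (by omega)

private lemma temporal_last {u v : V} {W : G.Walk u v} {R : Sym2 V → ℤ → Prop} {ts : List ℤ}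
    (hf : List.Forall₂ R W.edges ts) (hW : 0 < W.length) :
    R (s(W.getVert (W.length - 1), v)) ts.getLast! := by
  have hlen : ts.length = W.length := by rw [← Walk.length_edges W]; exact hf.length_eq.symm
  have h := forall₂_getElem hf (i := W.length - 1) (by rw [Walk.length_edges]; omega) (by omega)
  rw [walk_edges_getElem W (W.length - 1) (by omega)] at h
  rw [show W.length - 1 + 1 = W.length from by omega, Walk.getVert_length] at h
  rwa [list_getLast!_eq' ts hlen (by omega)]

private lemma temporal_penult {u v : V} {W : G.Walk u v} {R : Sym2 V → ℤ → Prop} {ts : List ℤ}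
    (hf : List.Forall₂ R W.edges ts) (hW : 2 ≤ W.length) :
    R (s(W.getVert (W.length - 1 - 1), W.getVert (W.length - 1)))
      (ts.take (W.length - 1)).getLast! := by
  have hlen : ts.length = W.length := by rw [← Walk.length_edges W]; exact hf.length_eq.symm
  have h := forall₂_getElem hf (i := W.length - 1 - 1) (by rw [Walk.length_edges]; omega)
    (by omega)
  rw [walk_edges_getElem W (W.length - 1 - 1) (by omega)] at h
  rw [show W.length - 1 - 1 + 1 = W.length - 1 from by omega] at h
  rwa [getLast!_take ts (m := W.length - 1) (by omega) (by omega)]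

end Helpers


/-- Split vertex lemma: let `S_{u,v} = (vv 0, …, vv p)` and `S_{w,z} = (zz 0, …, zz r)` be
segments (internal vertices have degree 2), `v_i = vv iIdx` internal in `S_{u,v}`, and
`z_j = zz jIdx` an internal vertex of `S_{w,z}` maximizing the fastest-path duration
`D v_i ·` over internal vertices of `S_{w,z}`. If a fastest temporal path from `v_i` to
`z_j` leaves `S_{u,v}` through `u` (its second vertex is `vv (iIdx−1)`) and enters
`S_{w,z}` through `w` (its second-to-last vertex is `zz (jIdx−1)`), then for every
internal vertex `zz ℓ` strictly closer to `w` than `z_j`, some fastest temporal path from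
`v_i` to `zz ℓ` also leaves through `u` and enters through `w`. -/
theorem stmt17 {V : Type*} (G : SimpleGraph V) (Δ : ℕ) (hΔ : 1 ≤ Δ)
    (lab : Sym2 V → ℤ) (hval : ValidLab G Δ lab) (D : V → V → ℤ)
    (hreal : ∀ x y : V, x ≠ y → IsFastest G Δ lab x y (D x y))
    (p r iIdx jIdx : ℕ) (vv zz : ℕ → V) (hp : 2 ≤ p) (hr : 2 ≤ r)
    (hvadj : ∀ t, t + 1 ≤ p → G.Adj (vv t) (vv (t + 1)))
    (hzadj : ∀ t, t + 1 ≤ r → G.Adj (zz t) (zz (t + 1)))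
    (hvinj : ∀ s t, s ≤ p → t ≤ p → vv s = vv t → s = t)
    (hzinj : ∀ s t, s ≤ r → t ≤ r → zz s = zz t → s = t)
    (hdisj : ∀ s t, 1 ≤ s → s ≤ p - 1 → 1 ≤ t → t ≤ r - 1 → vv s ≠ zz t)
    (hvdeg : ∀ t, 1 ≤ t → t ≤ p - 1 → ∀ y, G.Adj (vv t) y → y = vv (t - 1) ∨ y = vv (t + 1))
    (hzdeg : ∀ t, 1 ≤ t → t ≤ r - 1 → ∀ y, G.Adj (zz t) y → y = zz (t - 1) ∨ y = zz (t + 1))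
    (hi1 : 1 ≤ iIdx) (hi2 : iIdx ≤ p - 1) (hj1 : 1 ≤ jIdx) (hj2 : jIdx ≤ r - 1)
    (hsplit : ∀ t, 1 ≤ t → t ≤ r - 1 → D (vv iIdx) (zz t) ≤ D (vv iIdx) (zz jIdx))
    (hfastpath : ∃ (W : G.Walk (vv iIdx) (zz jIdx)) (times : List ℤ),
      W.IsPath ∧ IsTemporalWalk G Δ lab W times ∧
      duration times = D (vv iIdx) (zz jIdx) ∧
      W.getVert 1 = vv (iIdx - 1) ∧ W.getVert (W.length - 1) = zz (jIdx - 1)) :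
    ∀ ℓ, 1 ≤ ℓ → ℓ < jIdx →
      ∃ (W : G.Walk (vv iIdx) (zz ℓ)) (times : List ℤ),
        W.IsPath ∧ IsTemporalWalk G Δ lab W times ∧
        duration times = D (vv iIdx) (zz ℓ) ∧
        W.getVert 1 = vv (iIdx - 1) ∧ W.getVert (W.length - 1) = zz (ℓ - 1) := by
  classical
  have hvine : ∀ m, 1 ≤ m → m ≤ r - 1 → vv iIdx ≠ zz m := fun m h1 h2 =>
    hdisj iIdx m hi1 hi2 h1 h2
  have step : ∀ ℓ : ℕ, 2 ≤ ℓ → ℓ ≤ jIdx →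
      (∃ (W : G.Walk (vv iIdx) (zz ℓ)) (times : List ℤ),
        W.IsPath ∧ IsTemporalWalk G Δ lab W times ∧
        duration times = D (vv iIdx) (zz ℓ) ∧
        W.getVert 1 = vv (iIdx - 1) ∧ W.getVert (W.length - 1) = zz (ℓ - 1)) →
      (∃ (W : G.Walk (vv iIdx) (zz (ℓ - 1))) (times : List ℤ),
        W.IsPath ∧ IsTemporalWalk G Δ lab W times ∧
        duration times = D (vv iIdx) (zz (ℓ - 1)) ∧
        W.getVert 1 = vv (iIdx - 1) ∧ W.getVert (W.length - 1) = zz (ℓ - 1 - 1)) := by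
    rintro ℓ hl2 hlj ⟨W, ts, hWp, ⟨hWf, hWc⟩, hWd, hW1, hWsec⟩
    have hlr : ℓ ≤ r - 1 := le_trans hlj hj2
    have hne_l : vv iIdx ≠ zz ℓ := hvine ℓ (by omega) (by omega)
    have hne_l1 : vv iIdx ≠ zz (ℓ - 1) := hvine (ℓ - 1) (by omega) (by omega)
    -- W has length at least 2
    have hn2 : 2 ≤ W.length := by
      by_contra hcon
      push_neg at hcon
      have h01 : W.length = 0 ∨ W.length = 1 := by omega
      rcases h01 with h0 | h1
      · exact hne_l (eq_of_walk_length_zero W h0)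
      · rw [h1] at hWsec
        simp only [Nat.sub_self, Walk.getVert_zero] at hWsec
        exact hne_l1 hWsec
    have htslen : ts.length = W.length := by
      rw [← Walk.length_edges W]; exact hWf.length_eq.symm
    -- truncation of W at zz (ℓ-1)
    have hmem : zz (ℓ - 1) ∈ W.support := hWsec ▸ getVert_mem W (by omega)
    have hTlen : (W.takeUntil _ hmem).length = W.length - 1 :=
      length_takeUntil_eq hWp (by omega) hWsec hmem
    have hedges : W.edges = (W.takeUntil _ hmem).edges ++ (W.dropUntil _ hmem).edges := by
      conv_lhs => rw [← W.take_spec hmem]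
      rw [Walk.edges_append]
    have hElen : (W.takeUntil _ hmem).edges.length = W.length - 1 := by
      rw [Walk.length_edges, hTlen]
    have hf₁ : List.Forall₂ (fun e t => Active G Δ lab e t) (W.takeUntil _ hmem).edges
        (ts.take (W.length - 1)) := by
      have h' := List.forall₂_take (W.takeUntil _ hmem).edges.length hWf
      rw [hedges, List.take_left] at h'
      rwa [hElen] at h'
    have hc₁ : (ts.take (W.length - 1)).Chain' (· < ·) := hWc.take _
    have hts1len : (ts.take (W.length - 1)).length = W.length - 1 := by
      rw [List.length_take]; omega
    have hts1ne : ts.take (W.length - 1) ≠ [] := by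
      intro h
      rw [h] at hts1len
      simp at hts1len
      omega
    have ha : (ts.take (W.length - 1)).head! = ts.head! := list_head!_take ts _ (by omega)
    have htT : (ts.take (W.length - 1)).getLast! < ts.getLast! :=
      chain'_take_getLast!_lt ts hWc (by omega) (by omega)
    have hA2 : Active G Δ lab (s(zz (ℓ-1), zz ℓ)) ts.getLast! := by
      have h := temporal_last hWf (by omega)
      rwa [hWsec] at h
    have hadj3 : G.Adj (W.getVert (W.length - 1 - 1)) (zz (ℓ - 1)) := by
      have h := W.adj_getVert_succ (i := W.length - 1 - 1) (by omega)
      rw [show W.length - 1 - 1 + 1 = W.length - 1 from by omega, hWsec] at h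
      exact h
    have hthird : W.getVert (W.length - 1 - 1) = zz (ℓ - 2) := by
      rcases hzdeg (ℓ - 1) (by omega) (by omega) _ hadj3.symm with h | h
      · rw [h]
        congr 1
        all_goals omega
      · exfalso
        rw [show ℓ - 1 + 1 = ℓ from by omega] at h
        have heq : W.getVert (W.length - 1 - 1) = W.getVert W.length := by
          rw [h, Walk.getVert_length]
        have := path_getVert_inj W hWp _ _ (by omega) le_rfl heq
        omega
    have hA1 : Active G Δ lab (s(zz (ℓ-2), zz (ℓ-1))) (ts.take (W.length - 1)).getLast! := by
      have h := temporal_penult hWf hn2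
      rwa [hthird, hWsec] at h
    -- the fastest path P to zz (ℓ-1)
    obtain ⟨P, tsP, hPp, hPne, ⟨hPf, hPc⟩, hPd⟩ := (hreal _ _ hne_l1).1
    have htsPlen : tsP.length = P.length := by
      rw [← Walk.length_edges P]; exact hPf.length_eq.symm
    have hPlen : 1 ≤ P.length := by
      by_contra h
      push_neg at h
      exact hne_l1 (eq_of_walk_length_zero P (by omega))
    -- Claim A : P avoids zz jIdx
    have hjA : zz jIdx ∉ P.support := by
      intro hjmem
      have hQp := hPp.takeUntil hjmem
      have hQle := P.length_takeUntil_le hjmem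
      have hQlt : (P.takeUntil _ hjmem).length < P.length := by
        rcases lt_or_eq_of_le hQle with h | h
        · exact h
        · exfalso
          have hlen := congrArg Walk.length (P.take_spec hjmem)
          rw [Walk.length_append] at hlen
          have hdrop : (P.dropUntil _ hjmem).length = 0 := by omega
          have heq := eq_of_walk_length_zero _ hdrop
          have := hzinj jIdx (ℓ - 1) (by omega) (by omega) heq
          omega
      have hQpos : 0 < (P.takeUntil _ hjmem).length := by
        by_contra h
        push_neg at h
        exact hvine jIdx hj1 hj2 (eq_of_walk_length_zero (P.takeUntil _ hjmem) (by omega))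
      have hedgesP : P.edges = (P.takeUntil _ hjmem).edges ++ (P.dropUntil _ hjmem).edges := by
        conv_lhs => rw [← P.take_spec hjmem]
        rw [Walk.edges_append]
      have hQelen : (P.takeUntil _ hjmem).edges.length = (P.takeUntil _ hjmem).length :=
        Walk.length_edges _
      have hfQ : List.Forall₂ (fun e t => Active G Δ lab e t) (P.takeUntil _ hjmem).edges
          (tsP.take (P.takeUntil _ hjmem).length) := by
        have h' := List.forall₂_take (P.takeUntil _ hjmem).edges.length hPf
        rw [hedgesP, List.take_left] at h'
        rwa [hQelen] at h'
      have hQtlen : (tsP.take (P.takeUntil _ hjmem).length).length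
          = (P.takeUntil _ hjmem).length := by
        rw [List.length_take]; omega
      have hQtne : tsP.take (P.takeUntil _ hjmem).length ≠ [] := by
        intro h
        rw [h] at hQtlen
        simp at hQtlen
        omega
      have hQdur : HasDur G Δ lab (vv iIdx) (zz jIdx)
          (duration (tsP.take (P.takeUntil _ hjmem).length)) :=
        ⟨_, _, hQp, hQtne, ⟨hfQ, hPc.take _⟩, rfl⟩
      have hD1 : D (vv iIdx) (zz jIdx) ≤ duration (tsP.take (P.takeUntil _ hjmem).length) :=
        (hreal _ _ (hvine jIdx hj1 hj2)).2 _ hQdur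
      have e1 : (tsP.take (P.takeUntil _ hjmem).length).getLast!
          < tsP.getLast! := chain'_take_getLast!_lt tsP hPc (by omega) (by omega)
      have e2 : (tsP.take (P.takeUntil _ hjmem).length).head! = tsP.head! :=
        list_head!_take _ _ (by omega)
      have hD2 : D (vv iIdx) (zz (ℓ-1)) ≤ D (vv iIdx) (zz jIdx) :=
        hsplit (ℓ-1) (by omega) (by omega)
      unfold duration at hD1 hPd
      rw [e2] at hD1
      linarith
    -- Claim B : P avoids zz ℓ
    have hlB : zz ℓ ∉ P.support := by
      intro hmem0
      have climb : ∀ k, ℓ + k ≤ jIdx → zz (ℓ + k) ∈ P.support := by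
        intro k
        induction k with
        | zero => intro _; simpa using hmem0
        | succ k ih =>
          intro hk
          have hks := ih (by omega)
          have hne1 : zz (ℓ + k) ≠ vv iIdx := (hvine (ℓ + k) (by omega) (by omega)).symm
          have hne2 : zz (ℓ + k) ≠ zz (ℓ - 1) := fun h => by
            have := hzinj _ _ (by omega) (by omega) h
            omega
          obtain ⟨a, b, hab, hadja, hadjb, hma, hmb⟩ := path_interior P hPp hks hne1 hne2
          have hda := hzdeg (ℓ + k) (by omega) (by omega) a hadja
          have hdb := hzdeg (ℓ + k) (by omega) (by omega) b hadjb
          show zz (ℓ + k + 1) ∈ P.support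
          rcases hda with h | h <;> rcases hdb with h' | h'
          · exact absurd (h.trans h'.symm) hab
          · exact h' ▸ hmb
          · exact h ▸ hma
          · exact h ▸ hma
      have hfin := climb (jIdx - ℓ) (by omega)
      rw [show ℓ + (jIdx - ℓ) = jIdx from by omega] at hfin
      exact hjA hfin
    -- P's last edge comes from zz (ℓ-2)
    have hPadj : G.Adj (P.getVert (P.length - 1)) (zz (ℓ - 1)) := by
      have h := P.adj_getVert_succ (i := P.length - 1) (by omega)
      rw [show P.length - 1 + 1 = P.length from by omega, Walk.getVert_length] at h
      exact h
    have hPsec : P.getVert (P.length - 1) = zz (ℓ - 2) := by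
      rcases hzdeg (ℓ - 1) (by omega) (by omega) _ hPadj.symm with h | h
      · rw [h]
        congr 1
        all_goals omega
      · exfalso
        apply hlB
        rw [show ℓ - 1 + 1 = ℓ from by omega] at h
        exact h ▸ getVert_mem P (by omega)
    have hAP : Active G Δ lab (s(zz (ℓ-2), zz (ℓ-1))) tsP.getLast! := by
      have h := temporal_last hPf (by omega)
      rwa [hPsec] at h
    have hst : tsP.getLast! ≡ (ts.take (W.length - 1)).getLast! [ZMOD (Δ : ℤ)] :=
      hAP.2.2.trans hA1.2.2.symm
    -- extend P by the edge zz (ℓ-1) → zz ℓ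
    have hadjext : G.Adj (zz (ℓ - 1)) (zz ℓ) := by
      have h := hzadj (ℓ - 1) (by omega)
      rwa [show ℓ - 1 + 1 = ℓ from by omega] at h
    have hτA : Active G Δ lab (s(zz (ℓ-1), zz ℓ))
        (ts.getLast! + (tsP.getLast! - (ts.take (W.length - 1)).getLast!)) := by
      refine ⟨hA2.1, ?_, ?_⟩
      · have h1 := hAP.2.1
        omega
      · have hm : ts.getLast! + (tsP.getLast! - (ts.take (W.length - 1)).getLast!)
            ≡ ts.getLast! + ((ts.take (W.length - 1)).getLast!
              - (ts.take (W.length - 1)).getLast!) [ZMOD (Δ : ℤ)] :=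
          (Int.ModEq.refl _).add (hst.sub (Int.ModEq.refl _))
        rw [sub_self, add_zero] at hm
        exact hm.trans hA2.2.2
    have hchain : (tsP ++ [ts.getLast! + (tsP.getLast! - (ts.take (W.length - 1)).getLast!)]).Chain'
        (· < ·) := by
      show List.IsChain _ _
      rw [List.isChain_append]
      refine ⟨hPc, List.isChain_singleton _, ?_⟩
      intro x hx y hy
      simp only [List.head?_cons, Option.mem_some_iff] at hy
      subst hy
      rw [List.getLast?_eq_getLast hPne, Option.mem_some_iff] at hx
      have hxv : x = tsP.getLast! := by
        rw [← hx]
        exact (List.getLast!_of_getLast? (List.getLast?_eq_getLast hPne)).symm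
      rw [hxv]
      omega
    have hfext : List.Forall₂ (fun e t => Active G Δ lab e t) (P.concat hadjext).edges
        (tsP ++ [ts.getLast! + (tsP.getLast! - (ts.take (W.length - 1)).getLast!)]) := by
      rw [Walk.edges_concat, List.concat_eq_append]
      exact List.rel_append hPf (List.Forall₂.cons hτA List.Forall₂.nil)
    have hnewdur : duration (tsP ++ [ts.getLast! + (tsP.getLast!
        - (ts.take (W.length - 1)).getLast!)])
        = ts.getLast! + (tsP.getLast! - (ts.take (W.length - 1)).getLast!) - tsP.head! + 1 := by
      unfold duration
      rw [list_getLast!_concat, list_head!_concat _ _ (by omega)]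
    have hnew : HasDur G Δ lab (vv iIdx) (zz ℓ)
        (ts.getLast! + (tsP.getLast! - (ts.take (W.length - 1)).getLast!) - tsP.head! + 1) :=
      ⟨P.concat hadjext, _, path_concat hPp hadjext hlB, by simp, ⟨hfext, hchain⟩, hnewdur⟩
    have hDle : D (vv iIdx) (zz ℓ)
        ≤ ts.getLast! + (tsP.getLast! - (ts.take (W.length - 1)).getLast!) - tsP.head! + 1 :=
      (hreal _ _ hne_l).2 _ hnew
    have htrdur : HasDur G Δ lab (vv iIdx) (zz (ℓ - 1))
        ((ts.take (W.length - 1)).getLast! - ts.head! + 1) :=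
      ⟨W.takeUntil _ hmem, ts.take (W.length - 1), hWp.takeUntil hmem, hts1ne, ⟨hf₁, hc₁⟩,
        by unfold duration; rw [ha]⟩
    have hDle2 : D (vv iIdx) (zz (ℓ - 1)) ≤ (ts.take (W.length - 1)).getLast! - ts.head! + 1 :=
      (hreal _ _ hne_l1).2 _ htrdur
    have hdureq : duration (ts.take (W.length - 1)) = D (vv iIdx) (zz (ℓ - 1)) := by
      unfold duration
      rw [ha]
      unfold duration at hWd hPd
      linarith
    refine ⟨W.takeUntil _ hmem, ts.take (W.length - 1), hWp.takeUntil hmem, ⟨hf₁, hc₁⟩,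
      hdureq, ?_, ?_⟩
    · rw [getVert_takeUntil W hmem (by omega)]
      exact hW1
    · rw [hTlen, getVert_takeUntil W hmem (by omega), hthird]
      congr 1
      all_goals omega
  -- main downward induction
  have main : ∀ k, k ≤ jIdx - 1 →
      ∃ (W : G.Walk (vv iIdx) (zz (jIdx - k))) (times : List ℤ),
        W.IsPath ∧ IsTemporalWalk G Δ lab W times ∧
        duration times = D (vv iIdx) (zz (jIdx - k)) ∧
        W.getVert 1 = vv (iIdx - 1) ∧ W.getVert (W.length - 1) = zz (jIdx - k - 1) := by
    intro k
    induction k with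
    | zero =>
      intro _
      simpa using hfastpath
    | succ k ih =>
      intro hk
      have h1 := ih (by omega)
      have h2 := step (jIdx - k) (by omega) (by omega) h1
      rw [show jIdx - k - 1 = jIdx - (k + 1) from by omega] at h2
      exact h2
  intro ℓ hl1 hlj
  have h := main (jIdx - ℓ) (by omega)
  rw [show jIdx - (jIdx - ℓ) = ℓ from by omega] at h
  exact h
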